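/- For any 4-regular graph G, the minimum number of Wordle guesses W(D_G) over the dictionary D_G satisfies γ(G) ≤ W(D_G) ≤ γ(G) + 4. -/

import Mathlib

/-- History of feedbacks after `n` guesses made by strategy `strat` against secret `w`. -/
def hist {α M : Type*} (strat : List M → α) (f : α → α → M) (w : α) : ℕ → List M
  | 0 => []
  | n + 1 => hist strat f w n ++ [f (strat (hist strat f w n)) w]

/-- The guesser can guarantee to discover any secret word of `D` within `ℓ` guesses. -/
def WinsWithin {α M : Type*} (D : Finset α) (f : α → α → M) (ℓ : ℕ) : Prop :=
  ∃ strat : List M → α,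
    (∀ w ∈ D, ∀ t, t < ℓ → strat (hist strat f w t) ∈ D) ∧
    ∀ w ∈ D, ∃ t < ℓ, strat (hist strat f w t) = w

/-- Minimum number of guesses sufficient for a guaranteed win. -/
noncomputable def WNum {α M : Type*} (D : Finset α) (f : α → α → M) : ℕ :=
  sInf {ℓ | WinsWithin D f ℓ}

/-- Wordle feedback: green positions, and for each letter the number of yellow marks
(the standard marking rule assigns, per letter, `min` of its non-green multiplicities
in the guess and in the secret). -/
def feedback {V : Type*} [DecidableEq V] (p w : Fin 5 → V) : (Fin 5 → Bool) × (V → ℕ) :=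
  ⟨fun i => decide (p i = w i),
   fun a => min ((Finset.univ.filter (fun i => p i = a ∧ p i ≠ w i)).card)
                ((Finset.univ.filter (fun i => w i = a ∧ p i ≠ w i)).card)⟩

/-- The word `w_v = (v, n₁, n₂, n₃, n₄)`. -/
def wv {V : Type*} (nbr : V → Fin 4 → V) (v : V) : Fin 5 → V :=
  fun i => Fin.cases v (fun j => nbr v j) i

/-- The constant word `w'_v = (v,v,v,v,v)`. -/
def wv' {V : Type*} (v : V) : Fin 5 → V := fun _ => v

/-- The dictionary `D_G` built from the graph. -/
def DG {V : Type*} [Fintype V] [DecidableEq V] (nbr : V → Fin 4 → V) :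
    Finset (Fin 5 → V) :=
  Finset.univ.image (wv nbr) ∪ Finset.univ.image wv'

/-- `S` is a dominating set of `G`. -/
def Dominating {V : Type*} (G : SimpleGraph V) (S : Finset V) : Prop :=
  ∀ u, ∃ v ∈ S, u = v ∨ G.Adj v u

/-- The domination number `γ(G)`. -/
noncomputable def gamma {V : Type*} (G : SimpleGraph V) : ℕ :=
  sInf {n | ∃ S : Finset V, S.card ≤ n ∧ Dominating G S}


section AuxWordle

variable {V : Type*} [DecidableEq V]

lemma wv_zero (nbr : V → Fin 4 → V) (v : V) : wv nbr v 0 = v := rfl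

lemma wv_succ (nbr : V → Fin 4 → V) (v : V) (j : Fin 4) : wv nbr v j.succ = nbr v j := by
  simp [wv]

lemma hist_length {α M : Type*} (strat : List M → α) (f : α → α → M) (w : α) (n : ℕ) :
    (hist strat f w n).length = n := by
  induction n with
  | zero => rfl
  | succ n ih => simp [hist, ih]

lemma hist_getD {α M : Type*} (strat : List M → α) (f : α → α → M) (w : α) (z : M) :
    ∀ {n t : ℕ}, t < n → (hist strat f w n).getD t z = f (strat (hist strat f w t)) w := by
  intro n
  induction n with
  | zero => intro t ht; omega
  | succ n ih =>
    intro t ht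
    rcases Nat.lt_succ_iff_lt_or_eq.mp ht with h | h
    · rw [hist, List.getD_append _ _ _ _ (by rw [hist_length]; exact h)]
      exact ih h
    · subst h
      rw [hist, List.getD_eq_getElem _ _ (by simp [hist_length])]
      simp [hist_length]

lemma green_iff {p w1 w2 : Fin 5 → V} (h : feedback p w1 = feedback p w2) (i : Fin 5) :
    p i = w1 i ↔ p i = w2 i := by
  have h2 := congrFun (congrArg Prod.fst h) i
  simp only [feedback] at h2
  exact decide_eq_decide.mp h2

lemma yellow_const (p : Fin 5 → V) (u a : V) : (feedback p (wv' u)).2 a = 0 := by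
  simp only [feedback, wv']
  rcases eq_or_ne a u with rfl | hne
  · have h0 : (Finset.univ.filter fun i : Fin 5 => p i = a ∧ p i ≠ a).card = 0 :=
      Finset.card_eq_zero.2 (Finset.filter_eq_empty_iff.2 (fun i _ => by tauto))
    exact Nat.eq_zero_of_le_zero ((min_le_left _ _).trans h0.le)
  · have h0 : (Finset.univ.filter fun i : Fin 5 => u = a ∧ p i ≠ u).card = 0 :=
      Finset.card_eq_zero.2 (Finset.filter_eq_empty_iff.2 (fun i _ h => hne h.1.symm))
    exact Nat.eq_zero_of_le_zero ((min_le_right _ _).trans h0.le)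

lemma yellow_pos (nbr : V → Fin 4 → V) {s u : V} (hsu : s ≠ u) (j : Fin 4)
    (hj : nbr s j = u) (hju : nbr u j ≠ u) :
    0 < (feedback (wv nbr s) (wv nbr u)).2 u := by
  simp only [feedback]
  refine lt_min (Finset.card_pos.2 ⟨j.succ, ?_⟩) (Finset.card_pos.2 ⟨0, ?_⟩)
  · refine Finset.mem_filter.2 ⟨Finset.mem_univ _, ?_, ?_⟩
    · rw [wv_succ, hj]
    · rw [wv_succ, wv_succ, hj]
      exact fun h => hju h.symm
  · refine Finset.mem_filter.2 ⟨Finset.mem_univ _, rfl, ?_⟩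
    rw [wv_zero, wv_zero]
    exact hsu

lemma exists_of_yellow_pos {p w : Fin 5 → V} {a : V}
    (h : 0 < (feedback p w).2 a) : ∃ i, w i = a := by
  simp only [feedback] at h
  obtain ⟨i, hi⟩ := Finset.card_pos.mp (lt_of_lt_of_le h (min_le_right _ _))
  exact ⟨i, (Finset.mem_filter.mp hi).2.1⟩

lemma feedback_const_notmem {p : Fin 5 → V} {u : V} (h : ∀ i, p i ≠ u) :
    feedback p (wv' u) = ⟨fun _ => false, fun _ => 0⟩ := by
  refine Prod.ext ?_ (funext fun a => yellow_const p u a)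
  funext i
  simp only [feedback, wv']
  exact decide_eq_false (h i)

end AuxWordle

section Lower

lemma gamma_le_of_wins {V : Type*} [Fintype V] [DecidableEq V]
    (G : SimpleGraph V) [DecidableRel G.Adj] (nbr : V → Fin 4 → V)
    (hnbr : ∀ v, Finset.univ.image (nbr v) = G.neighborFinset v)
    {ℓ : ℕ} (hwin : WinsWithin (DG nbr) feedback ℓ) : gamma G ≤ ℓ := by
  classical
  obtain ⟨strat, hmem, hhit⟩ := hwin
  set z : (Fin 5 → Bool) × (V → ℕ) := ⟨fun _ => false, fun _ => 0⟩ with hz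
  set q : ℕ → (Fin 5 → V) := fun t => strat (List.replicate t z) with hq
  apply Nat.sInf_le
  refine ⟨(Finset.range ℓ).image (fun t => q t 0),
    Finset.card_image_le.trans (by simp), ?_⟩
  intro u
  by_contra hcon
  push_neg at hcon
  have hdom : ∀ t, t < ℓ → u ≠ q t 0 ∧ ¬ G.Adj (q t 0) u := by
    intro t ht
    have h := hcon (q t 0) (Finset.mem_image.2 ⟨t, Finset.mem_range.2 ht, rfl⟩)
    tauto
  have hwu : wv' u ∈ DG nbr :=
    Finset.mem_union_right _ (Finset.mem_image.2 ⟨u, Finset.mem_univ u, rfl⟩)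
  have hzero : ∀ n, n ≤ ℓ → hist strat feedback (wv' u) n = List.replicate n z := by
    intro n hn
    induction n with
    | zero => rfl
    | succ n ih =>
      have hn' : n < ℓ := Nat.lt_of_succ_le hn
      have ihn := ih hn'.le
      rw [hist, ihn, List.replicate_succ']
      congr 1
      have hqD : q n ∈ DG nbr := by
        have h := hmem (wv' u) hwu n hn'
        rwa [ihn] at h
      obtain ⟨x, hx⟩ : ∃ x, q n = wv nbr x ∨ q n = wv' x := by
        rcases Finset.mem_union.mp hqD with h | h
        · obtain ⟨x, _, hx⟩ := Finset.mem_image.mp h; exact ⟨x, Or.inl hx.symm⟩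
        · obtain ⟨x, _, hx⟩ := Finset.mem_image.mp h; exact ⟨x, Or.inr hx.symm⟩
      have hx0 : q n 0 = x := by
        rcases hx with h | h <;> rw [h] <;> rfl
      have hnl : ∀ i, q n i ≠ u := by
        have h1 : u ≠ x := hx0 ▸ (hdom n hn').1
        have h2 : ¬ G.Adj x u := hx0 ▸ (hdom n hn').2
        intro i
        rcases hx with h | h
        · rw [h]
          induction i using Fin.cases with
          | zero => rw [wv_zero]; exact fun he => h1 he.symm
          | succ j =>
            rw [wv_succ]
            intro he
            apply h2
            have : nbr x j ∈ G.neighborFinset x := by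
              rw [← hnbr]; exact Finset.mem_image.2 ⟨j, Finset.mem_univ j, rfl⟩
            rw [he] at this
            exact (SimpleGraph.mem_neighborFinset _ _ _).mp this
        · rw [h]; exact fun he => h1 he.symm
      rw [show (feedback (strat (List.replicate n z)) (wv' u)) = feedback (q n) (wv' u) from rfl,
        feedback_const_notmem hnl]
  obtain ⟨t, ht, hguess⟩ := hhit (wv' u) hwu
  rw [hzero t ht.le] at hguess
  exact (hdom t ht).1 ((congrFun hguess 0).symm)

end Lower

/-- for a 4-regular graph `G`, `γ(G) ≤ W(D_G) ≤ γ(G) + 4`. -/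
theorem wordle_domination_sandwich {V : Type*} [Fintype V] [DecidableEq V]
    (G : SimpleGraph V) [DecidableRel G.Adj] (nbr : V → Fin 4 → V)
    (h4 : ∀ v, (G.neighborFinset v).card = 4)
    (hnbr : ∀ v, Finset.univ.image (nbr v) = G.neighborFinset v) :
    gamma G ≤ WNum (DG nbr) feedback ∧ WNum (DG nbr) feedback ≤ gamma G + 4 := by
  classical
  by_cases hV : Nonempty V
  swap
  · have hγ : gamma G = 0 := by
      refine Nat.le_zero.mp (Nat.sInf_le ⟨∅, by simp, fun u => (hV ⟨u⟩).elim⟩)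
    have hW : WNum (DG nbr) feedback = 0 := by
      unfold WNum
      convert Nat.sInf_empty
      ext ℓ
      simp only [Set.mem_setOf_eq, Set.mem_empty_iff_false, iff_false]
      rintro ⟨strat, -, -⟩
      exact hV ⟨strat [] 0⟩
    rw [hγ, hW]
    omega
  obtain ⟨d0⟩ := hV
  -- graph facts
  have hadj : ∀ v j, G.Adj v (nbr v j) := by
    intro v j
    have h : nbr v j ∈ G.neighborFinset v := by
      rw [← hnbr]; exact Finset.mem_image.2 ⟨j, Finset.mem_univ j, rfl⟩
    exact (SimpleGraph.mem_neighborFinset _ _ _).mp h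
  have hneq : ∀ v j, nbr v j ≠ v := fun v j => (hadj v j).ne'
  have hex : ∀ {v x : V}, G.Adj v x → ∃ j, nbr v j = x := by
    intro v x h
    have h2 : x ∈ Finset.univ.image (nbr v) := by
      rw [hnbr]; exact (SimpleGraph.mem_neighborFinset _ _ _).mpr h
    obtain ⟨j, -, hj⟩ := Finset.mem_image.mp h2
    exact ⟨j, hj⟩
  have hdecomp : ∀ w' ∈ DG nbr, ∃ x, w' = wv nbr x ∨ w' = wv' x := by
    intro w' hw'
    rcases Finset.mem_union.mp hw' with h | h
    · obtain ⟨x, -, hx⟩ := Finset.mem_image.mp h; exact ⟨x, Or.inl hx.symm⟩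
    · obtain ⟨x, -, hx⟩ := Finset.mem_image.mp h; exact ⟨x, Or.inr hx.symm⟩
  set γ := gamma G with hγdef
  obtain ⟨S, hScard, hSdom⟩ : ∃ S : Finset V, S.card ≤ γ ∧ Dominating G S := by
    have hne : {n | ∃ S : Finset V, S.card ≤ n ∧ Dominating G S}.Nonempty :=
      ⟨Fintype.card V, Finset.univ, by simp, fun u => ⟨u, Finset.mem_univ u, Or.inl rfl⟩⟩
    exact Nat.sInf_mem hne
  set z : (Fin 5 → Bool) × (V → ℕ) := ⟨fun _ => false, fun _ => 0⟩ with hzdef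
  set P : ℕ → (Fin 5 → V) := fun t => wv nbr (S.toList.getD t d0) with hPdef
  have hPD : ∀ t, P t ∈ DG nbr :=
    fun t => Finset.mem_union_left _ (Finset.mem_image.2 ⟨_, Finset.mem_univ _, rfl⟩)
  have hPS : ∀ s ∈ S, ∃ t, t < γ ∧ P t = wv nbr s := by
    intro s hs
    obtain ⟨k, hk, hget⟩ := List.mem_iff_getElem.mp (Finset.mem_toList.mpr hs)
    refine ⟨k, lt_of_lt_of_le (by rw [← Finset.length_toList S]; exact hk)
      hScard, ?_⟩
    simp only [hPdef]
    rw [List.getD_eq_getElem _ _ hk, hget]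
  set strat : List ((Fin 5 → Bool) × (V → ℕ)) → (Fin 5 → V) := fun h =>
    if h.length < γ then P h.length
    else (((DG nbr).filter
        (fun w' => ∀ t, t < γ → feedback (P t) w' = h.getD t z)).toList).getD
      (h.length - γ) (wv' d0) with hstratdef
  have hstrat_lt : ∀ h : List ((Fin 5 → Bool) × (V → ℕ)), h.length < γ →
      strat h = P h.length := by
    intro h hh; rw [hstratdef]; simp only; rw [if_pos hh]
  have hstrat_ge : ∀ h : List ((Fin 5 → Bool) × (V → ℕ)), ¬ h.length < γ →
      strat h = (((DG nbr).filter
        (fun w' => ∀ t, t < γ → feedback (P t) w' = h.getD t z)).toList).getD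
        (h.length - γ) (wv' d0) := by
    intro h hh; rw [hstratdef]; simp only; rw [if_neg hh]
  set C : (Fin 5 → V) → Finset (Fin 5 → V) := fun w =>
    (DG nbr).filter (fun w' => ∀ t, t < γ → feedback (P t) w' = feedback (P t) w)
    with hCdef
  have hCsub : ∀ w, C w ⊆ DG nbr := fun w => Finset.filter_subset _ _
  have hCmem : ∀ w ∈ DG nbr, w ∈ C w :=
    fun w hw => Finset.mem_filter.2 ⟨hw, fun t _ => rfl⟩
  -- phase 1 behaviour
  have hH1 : ∀ (w : Fin 5 → V) (t : ℕ), t < γ →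
      strat (hist strat feedback w t) = P t := by
    intro w t ht
    rw [hstrat_lt _ (by rw [hist_length]; exact ht), hist_length]
  have hstep : ∀ w, ∀ n, γ ≤ n →
      strat (hist strat feedback w n) = (C w).toList.getD (n - γ) (wv' d0) := by
    intro w n hn
    rw [hstrat_ge _ (by rw [hist_length]; omega), hist_length]
    have heq : ((DG nbr).filter
        (fun w' => ∀ t, t < γ → feedback (P t) w' =
          (hist strat feedback w n).getD t z)) = C w := by
      refine Finset.filter_congr ?_
      intro w' _
      refine forall_congr' fun t => imp_congr_right fun ht => ?_
      rw [hist_getD strat feedback w z (lt_of_lt_of_le ht hn), hH1 w t ht]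
    rw [heq]
  -- the key combinatorial bound
  have hC4 : ∀ w ∈ DG nbr, (C w).card ≤ 4 := by
    intro w hw
    obtain ⟨u, hu⟩ := hdecomp w hw
    by_cases huS : u ∈ S
    · obtain ⟨t, ht, hPt⟩ := hPS u huS
      have hsub : C w ⊆ {w} := by
        intro w' hw'
        obtain ⟨hw'D, hcons⟩ := Finset.mem_filter.mp hw'
        have hcons_t := hcons t ht
        rw [hPt] at hcons_t
        rcases hu with rfl | rfl
        · have hall : ∀ i, w' i = wv nbr u i := by
            intro i
            exact ((green_iff hcons_t i).mpr rfl).symm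
          exact Finset.mem_singleton.2 (funext hall)
        · have h0 : w' 0 = u := by
            have h := (green_iff hcons_t 0).mpr rfl
            rw [wv_zero] at h
            exact h.symm
          obtain ⟨x, hx⟩ := hdecomp w' hw'D
          rcases hx with rfl | rfl
          · exfalso
            have hxu : x = u := by rw [← wv_zero nbr x, h0]
            subst hxu
            have h := (green_iff hcons_t (Fin.succ 0)).mp (by rw [wv_succ])
            rw [wv_succ] at h
            exact hneq x 0 h
          · have hxu : x = u := h0
            subst hxu
            exact Finset.mem_singleton.2 rfl
      exact (Finset.card_le_card hsub).trans (by simp)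
    · obtain ⟨s, hsS, hsu⟩ := hSdom u
      have hadj_su : G.Adj s u := by
        rcases hsu with rfl | h
        · exact absurd hsS huS
        · exact h
      obtain ⟨t, ht, hPt⟩ := hPS s hsS
      obtain ⟨j, hj⟩ := hex hadj_su
      rcases hu with rfl | rfl
      · -- secret is w_u, u ∉ S
        have hsub : C (wv nbr u) ⊆
            insert (wv nbr u) ((G.neighborFinset u \ S).image (wv nbr)) := by
          intro w' hw'
          obtain ⟨hw'D, hcons⟩ := Finset.mem_filter.mp hw'
          have hcons_t := hcons t ht
          rw [hPt] at hcons_t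
          have hypos : 0 < (feedback (wv nbr s) w').2 u := by
            rw [congrFun (congrArg Prod.snd hcons_t) u]
            exact yellow_pos nbr hadj_su.ne j hj (hneq u j)
          obtain ⟨x, hx⟩ := hdecomp w' hw'D
          rcases hx with rfl | rfl
          swap
          · exfalso
            rw [yellow_const] at hypos
            exact lt_irrefl 0 hypos
          · obtain ⟨i, hi⟩ := exists_of_yellow_pos hypos
            by_cases hxu : x = u
            · subst hxu; exact Finset.mem_insert_self _ _
            · refine Finset.mem_insert_of_mem (Finset.mem_image.2 ⟨x, ?_, rfl⟩)
              refine Finset.mem_sdiff.2 ⟨?_, ?_⟩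
              · induction i using Fin.cases with
                | zero => exact absurd (by rw [wv_zero] at hi; exact hi) hxu
                | succ j' =>
                  rw [wv_succ] at hi
                  exact (SimpleGraph.mem_neighborFinset _ _ _).mpr
                    ((hi ▸ hadj x j').symm)
              · intro hxS
                obtain ⟨t', ht', hPt'⟩ := hPS x hxS
                have hcons' := hcons t' ht'
                rw [hPt'] at hcons'
                have h := (green_iff hcons' 0).mp rfl
                rw [wv_zero, wv_zero] at h
                exact hxu h
        have hcard : (G.neighborFinset u \ S).card ≤ 3 := by
          have hsmem : s ∈ G.neighborFinset u :=
            (SimpleGraph.mem_neighborFinset _ _ _).mpr hadj_su.symm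
          have hsub2 : G.neighborFinset u \ S ⊆ (G.neighborFinset u).erase s := by
            intro x hx
            obtain ⟨h1, h2⟩ := Finset.mem_sdiff.mp hx
            exact Finset.mem_erase.2 ⟨fun he => h2 (he ▸ hsS), h1⟩
          calc (G.neighborFinset u \ S).card
              ≤ ((G.neighborFinset u).erase s).card := Finset.card_le_card hsub2
            _ = 4 - 1 := by rw [Finset.card_erase_of_mem hsmem, h4]
            _ ≤ 3 := by norm_num
        calc (C (wv nbr u)).card
            ≤ (insert (wv nbr u) ((G.neighborFinset u \ S).image (wv nbr))).card :=
              Finset.card_le_card hsub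
          _ ≤ ((G.neighborFinset u \ S).image (wv nbr)).card + 1 :=
              Finset.card_insert_le _ _
          _ ≤ (G.neighborFinset u \ S).card + 1 :=
              Nat.add_le_add_right Finset.card_image_le _
          _ ≤ 4 := by omega
      · -- secret is w'_u, u ∉ S
        have hsub : C (wv' u) ⊆ {wv' u} := by
          intro w' hw'
          obtain ⟨hw'D, hcons⟩ := Finset.mem_filter.mp hw'
          have hcons_t := hcons t ht
          rw [hPt] at hcons_t
          have hgj : w' j.succ = u := by
            have h := (green_iff hcons_t j.succ).mpr (by rw [wv_succ, hj]; rfl)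
            rw [wv_succ, hj] at h
            exact h.symm
          obtain ⟨x, hx⟩ := hdecomp w' hw'D
          rcases hx with rfl | rfl
          · exfalso
            have hxj : nbr x j = u := by rw [← wv_succ nbr x j, hgj]
            have hxu : x ≠ u := by
              intro h; subst h; exact hneq x j hxj
            have hadj_xu : G.Adj x u := hxj ▸ hadj x j
            by_cases hxS : x ∈ S
            · obtain ⟨t', ht', hPt'⟩ := hPS x hxS
              have hcons' := hcons t' ht'
              rw [hPt'] at hcons'
              have h := (green_iff hcons' 0).mp rfl
              rw [wv_zero] at h
              exact hxu h
            · obtain ⟨s1, hs1S, hs1x⟩ := hSdom x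
              have hadj1 : G.Adj s1 x := by
                rcases hs1x with rfl | h
                · exact absurd hs1S hxS
                · exact h
              obtain ⟨j1, hj1⟩ := hex hadj1
              obtain ⟨t1, ht1, hPt1⟩ := hPS s1 hs1S
              have hcons1 := hcons t1 ht1
              rw [hPt1] at hcons1
              have hy := congrFun (congrArg Prod.snd hcons1) x
              rw [yellow_const] at hy
              have hp := yellow_pos nbr hadj1.ne j1 hj1 (hneq x j1)
              omega
          · have hxu : x = u := hgj
            subst hxu
            exact Finset.mem_singleton.2 rfl
        exact (Finset.card_le_card hsub).trans (by simp)
  -- the strategy wins within γ + 4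
  have hwin4 : WinsWithin (DG nbr) feedback (γ + 4) := by
    refine ⟨strat, ?_, ?_⟩
    · intro w hw t htl
      by_cases ht : t < γ
      · rw [hH1 w t ht]; exact hPD t
      · rw [hstep w t (by omega)]
        by_cases hlt : t - γ < (C w).toList.length
        · rw [List.getD_eq_getElem _ _ hlt]
          exact hCsub w (Finset.mem_toList.mp (List.getElem_mem hlt))
        · rw [List.getD_eq_default _ _ (by omega)]
          exact Finset.mem_union_right _
            (Finset.mem_image.2 ⟨d0, Finset.mem_univ d0, rfl⟩)
    · intro w hw
      have hwC : w ∈ (C w).toList := Finset.mem_toList.mpr (hCmem w hw)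
      obtain ⟨k, hk, hget⟩ := List.mem_iff_getElem.mp hwC
      have hk4 : k < 4 := by
        have := (Finset.length_toList (C w)) ▸ hk
        have := hC4 w hw
        omega
      refine ⟨γ + k, by omega, ?_⟩
      rw [hstep w (γ + k) (by omega)]
      have hkγ : γ + k - γ = k := by omega
      rw [hkγ, List.getD_eq_getElem _ _ hk, hget]
  have hmemset : (γ + 4) ∈ {ℓ | WinsWithin (DG nbr) feedback ℓ} := hwin4
  constructor
  · have hne2 : {ℓ | WinsWithin (DG nbr) feedback ℓ}.Nonempty := ⟨γ + 4, hmemset⟩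
    have hWmem : WinsWithin (DG nbr) feedback (WNum (DG nbr) feedback) :=
      Nat.sInf_mem hne2
    exact gamma_le_of_wins G nbr hnbr hWmem
  · exact Nat.sInf_le hmemset
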